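/- Let X = (X_m)_{m∈ℤ} be a family of continuous functions ℝ → ℝ, with last-passage values L_{(m,s),(n,t)}(X) = sup { Σ_{r=m}^n (X_r(s_r) - X_r(s_{r-1})) : s = s_{m-1} ≤ ⋯ ≤ s_n = t }. Then for 0 < s < t < u and m < n: 0 ≤ L_{(m,s),(n,t)}(X) - L_{(m+1,s),(n,t)}(X) ≤ L_{(m,s),(n,u)}(X) - L_{(m+1,s),(n,u)}(X). -/

import Mathlib

open Filter Set

/-- A sequence `σ : ℤ → ℝ` encodes an up-right path from `(m,s)` to `(n,t)` via its
jump times: `σ (m-1) = s`, `σ n = t`, and `σ` is nondecreasing on `[m-1, n]`. -/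
def IsPath (m n : ℤ) (s t : ℝ) (σ : ℤ → ℝ) : Prop :=
  σ (m - 1) = s ∧ σ n = t ∧ ∀ r : ℤ, m - 1 ≤ r → r < n → σ r ≤ σ (r + 1)

/-- The energy collected by the path `σ` in the environment `X`:
`Σ_{r=m}^n (X_r(σ_r) - X_r(σ_{r-1}))`. -/
noncomputable def energy (X : ℤ → ℝ → ℝ) (m n : ℤ) (σ : ℤ → ℝ) : ℝ :=
  ∑ r ∈ Finset.Icc m n, (X r (σ r) - X r (σ (r - 1)))

/-- The semi-discrete last-passage value `L_{(m,s),(n,t)}(X)`. -/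
noncomputable def LPP (X : ℤ → ℝ → ℝ) (m : ℤ) (s : ℝ) (n : ℤ) (t : ℝ) : ℝ :=
  sSup (energy X m n '' {σ | IsPath m n s t σ})

lemma path_mono {m n : ℤ} {s t : ℝ} {σ : ℤ → ℝ} (h : IsPath m n s t σ)
    {a : ℤ} (ha : m - 1 ≤ a) : ∀ b, a ≤ b → b ≤ n → σ a ≤ σ b := by
  refine Int.le_induction (fun _ => le_rfl) ?_
  intro b hb ih hbn
  exact (ih (by omega)).trans (h.2.2 b (by omega) (by omega))

lemma path_mem {m n : ℤ} {s t : ℝ} {σ : ℤ → ℝ} (h : IsPath m n s t σ)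
    {r : ℤ} (hr1 : m - 1 ≤ r) (hr2 : r ≤ n) : σ r ∈ Set.Icc s t := by
  constructor
  · have := path_mono h (le_refl (m - 1)) r hr1 hr2
    rwa [h.1] at this
  · have := path_mono h hr1 n hr2 le_rfl
    rwa [h.2.1] at this

lemma energy_le {X : ℤ → ℝ → ℝ} (hX : ∀ r, Continuous (X r)) {m n : ℤ} {s t : ℝ}
    {σ : ℤ → ℝ} (hσ : IsPath m n s t σ) :
    energy X m n σ ≤ ∑ r ∈ Finset.Icc m n,
      (sSup (X r '' Set.Icc s t) - sInf (X r '' Set.Icc s t)) := by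
  apply Finset.sum_le_sum
  intro r hr
  simp only [Finset.mem_Icc] at hr
  have h1 : σ r ∈ Set.Icc s t := path_mem hσ (by omega) hr.2
  have h2 : σ (r - 1) ∈ Set.Icc s t := path_mem hσ (by omega) (by omega)
  have hb : BddAbove (X r '' Set.Icc s t) :=
    (isCompact_Icc.image (hX r)).bddAbove
  have hb' : BddBelow (X r '' Set.Icc s t) :=
    (isCompact_Icc.image (hX r)).bddBelow
  have e1 := le_csSup hb (Set.mem_image_of_mem _ h1)
  have e2 := csInf_le hb' (Set.mem_image_of_mem _ h2)
  linarith

lemma bddAbove_energy {X : ℤ → ℝ → ℝ} (hX : ∀ r, Continuous (X r)) (m n : ℤ) (s t : ℝ) :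
    BddAbove (energy X m n '' {σ | IsPath m n s t σ}) := by
  refine ⟨∑ r ∈ Finset.Icc m n,
      (sSup (X r '' Set.Icc s t) - sInf (X r '' Set.Icc s t)), ?_⟩
  rintro x ⟨σ, hσ, rfl⟩
  exact energy_le hX hσ

lemma exists_path {m n : ℤ} {s t : ℝ} (hmn : m ≤ n) (hst : s ≤ t) :
    ∃ σ, IsPath m n s t σ := by
  refine ⟨fun r => if r < n then s else t, ?_, ?_, ?_⟩
  · simp only [if_pos (show m - 1 < n by omega)]
  · simp only [if_neg (lt_irrefl n)]
  · intro r h1 h2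
    dsimp only
    rw [if_pos h2]
    split
    · exact le_rfl
    · exact hst

lemma nonempty_energy {X : ℤ → ℝ → ℝ} {m n : ℤ} {s t : ℝ} (hmn : m ≤ n) (hst : s ≤ t) :
    (energy X m n '' {σ | IsPath m n s t σ}).Nonempty := by
  obtain ⟨σ, hσ⟩ := exists_path hmn hst
  exact ⟨energy X m n σ, σ, hσ, rfl⟩

lemma energy_split (X : ℤ → ℝ → ℝ) {m n : ℤ} (hmn : m ≤ n) (σ : ℤ → ℝ) :
    energy X m n σ = (X m (σ m) - X m (σ (m - 1))) + energy X (m + 1) n σ := by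
  unfold energy
  rw [show Finset.Icc m n = insert m (Finset.Icc (m + 1) n) by
        ext x; simp only [Finset.mem_Icc, Finset.mem_insert]; omega,
      Finset.sum_insert (by simp only [Finset.mem_Icc]; omega)]

/-- Monotonicity in the starting level: a path from `(m+1,s)` extends to a path
from `(m,s)` with the same energy. -/
lemma lpp_succ_le {X : ℤ → ℝ → ℝ} (hX : ∀ r, Continuous (X r)) {m n : ℤ} {s t : ℝ}
    (hmn : m < n) (hst : s ≤ t) :
    LPP X (m + 1) s n t ≤ LPP X m s n t := by
  apply csSup_le (nonempty_energy (by omega) hst)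
  rintro x ⟨σ', hσ', rfl⟩
  simp only [Set.mem_setOf_eq] at hσ'
  have hσ'm : σ' m = s := by
    have := hσ'.1; rwa [show m + 1 - 1 = m by omega] at this
  set σ : ℤ → ℝ := fun r => if r = m - 1 then s else σ' r with hσdef
  have hpath : IsPath m n s t σ := by
    refine ⟨by simp [σ], ?_, ?_⟩
    · simp only [σ, if_neg (show n ≠ m - 1 by omega)]
      exact hσ'.2.1
    · intro r h1 h2
      rcases eq_or_lt_of_le h1 with h | h
      · simp only [σ, if_pos h.symm, if_neg (show r + 1 ≠ m - 1 by omega)]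
        rw [show r + 1 = m by omega, hσ'm]
      · simp only [σ, if_neg (show r ≠ m - 1 by omega),
          if_neg (show r + 1 ≠ m - 1 by omega)]
        exact hσ'.2.2 r (by omega) h2
  have henergy : energy X m n σ = energy X (m + 1) n σ' := by
    rw [energy_split X (le_of_lt hmn) σ]
    have h1 : σ m = σ' m := by simp only [σ, if_neg (show m ≠ m - 1 by omega)]
    have h2 : σ (m - 1) = s := by simp [σ]
    rw [h1, h2, hσ'm, sub_self, zero_add]
    unfold energy
    apply Finset.sum_congr rfl
    intro r hr
    simp only [Finset.mem_Icc] at hr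
    simp only [σ, if_neg (show r ≠ m - 1 by omega),
      if_neg (show r - 1 ≠ m - 1 by omega)]
  rw [← henergy]
  exact le_csSup (bddAbove_energy hX m n s t) ⟨σ, hpath, rfl⟩

/-- The crossing/swap construction. -/
lemma cross {X : ℤ → ℝ → ℝ} {m n : ℤ} {s t u : ℝ}
    (hmn : m < n) (hst : s ≤ t) (htu : t ≤ u)
    {σ τ : ℤ → ℝ} (hσ : IsPath m n s t σ) (hτ : IsPath (m + 1) n s u τ) :
    ∃ σ' τ', IsPath m n s u σ' ∧ IsPath (m + 1) n s t τ' ∧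
      energy X m n σ' + energy X (m + 1) n τ' = energy X m n σ + energy X (m + 1) n τ := by
  have hτm : τ m = s := by
    have := hτ.1; rwa [show m + 1 - 1 = m by omega] at this
  -- the last crossing level
  have hmT : m ∈ (Finset.Icc m (n - 1)).filter (fun r => τ r ≤ σ r) := by
    rw [Finset.mem_filter, Finset.mem_Icc]
    refine ⟨⟨le_rfl, by omega⟩, ?_⟩
    rw [hτm]
    exact (path_mem hσ (by omega) (by omega)).1
  set T := (Finset.Icc m (n - 1)).filter (fun r => τ r ≤ σ r) with hTdef
  set r0 := T.max' ⟨m, hmT⟩ with hr0def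
  have hr0T : r0 ∈ T := T.max'_mem _
  rw [hTdef, Finset.mem_filter, Finset.mem_Icc] at hr0T
  obtain ⟨⟨hmr0, hr0n⟩, hτσ⟩ := hr0T
  have hkey : σ (r0 + 1) ≤ τ (r0 + 1) := by
    rcases eq_or_lt_of_le (show r0 + 1 ≤ n by omega) with h | h
    · rw [h, hσ.2.1, hτ.2.1]; exact htu
    · by_contra hc
      push_neg at hc
      have : r0 + 1 ∈ T := by
        rw [hTdef, Finset.mem_filter, Finset.mem_Icc]
        exact ⟨⟨by omega, by omega⟩, le_of_lt hc⟩
      have := T.le_max' _ this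
      omega
  set σ' : ℤ → ℝ := fun j => if j ≤ r0 then σ j else τ j with hσ'def
  set τ' : ℤ → ℝ := fun j => if j ≤ r0 then τ j else σ j with hτ'def
  have hσ'path : IsPath m n s u σ' := by
    refine ⟨?_, ?_, ?_⟩
    · simp only [σ', if_pos (show m - 1 ≤ r0 by omega)]; exact hσ.1
    · simp only [σ', if_neg (show ¬ n ≤ r0 by omega)]; exact hτ.2.1
    · intro j h1 h2
      rcases le_or_gt (j + 1) r0 with h | h
      · simp only [σ', if_pos h, if_pos (show j ≤ r0 by omega)]
        exact hσ.2.2 j h1 h2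
      · rcases le_or_gt j r0 with h' | h'
        · have hj : j = r0 := by omega
          simp only [σ', if_pos h', if_neg (not_le.mpr h)]
          rw [hj]
          exact le_trans (hσ.2.2 r0 (by omega) (by omega)) hkey
        · simp only [σ', if_neg (not_le.mpr h'), if_neg (not_le.mpr h)]
          exact hτ.2.2 j (by omega) h2
  have hτ'path : IsPath (m + 1) n s t τ' := by
    refine ⟨?_, ?_, ?_⟩
    · rw [show m + 1 - 1 = m by omega]
      simp only [τ', if_pos hmr0]; exact hτm
    · simp only [τ', if_neg (show ¬ n ≤ r0 by omega)]; exact hσ.2.1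
    · intro j h1 h2
      rcases le_or_gt (j + 1) r0 with h | h
      · simp only [τ', if_pos h, if_pos (show j ≤ r0 by omega)]
        exact hτ.2.2 j h1 h2
      · rcases le_or_gt j r0 with h' | h'
        · have hj : j = r0 := by omega
          simp only [τ', if_pos h', if_neg (not_le.mpr h)]
          rw [hj]
          exact le_trans hτσ (hσ.2.2 r0 (by omega) (by omega))
        · simp only [τ', if_neg (not_le.mpr h'), if_neg (not_le.mpr h)]
          exact hσ.2.2 j (by omega) h2
  refine ⟨σ', τ', hσ'path, hτ'path, ?_⟩
  have hpoint : ∀ r ∈ Finset.Icc (m + 1) n,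
      ((X r (σ' r) - X r (σ' (r - 1))) + (X r (τ' r) - X r (τ' (r - 1))))
        = ((X r (σ r) - X r (σ (r - 1))) + (X r (τ r) - X r (τ (r - 1)))) := by
    intro r hr
    rcases le_or_gt r r0 with h | h
    · simp only [σ', τ', if_pos h, if_pos (show r - 1 ≤ r0 by omega)]
    · rcases le_or_gt (r - 1) r0 with h2 | h2
      · have hr1 : r - 1 = r0 := by omega
        simp only [σ', τ', if_neg (not_le.mpr h), hr1, if_pos (le_refl r0)]
        ring
      · simp only [σ', τ', if_neg (not_le.mpr h), if_neg (not_le.mpr h2)]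
        ring
  have hσ'm : σ' m = σ m := by simp only [σ', if_pos hmr0]
  have hσ'm1 : σ' (m - 1) = σ (m - 1) := by
    simp only [σ', if_pos (show m - 1 ≤ r0 by omega)]
  rw [energy_split X (le_of_lt hmn) σ', energy_split X (le_of_lt hmn) σ, hσ'm, hσ'm1]
  have hsum : energy X (m + 1) n σ' + energy X (m + 1) n τ'
      = energy X (m + 1) n σ + energy X (m + 1) n τ := by
    unfold energy
    rw [← Finset.sum_add_distrib, ← Finset.sum_add_distrib]
    exact Finset.sum_congr rfl hpoint
  linarith

/-- Lemma A.4, second statement: comparison of vertical increments of last-passage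
values in a continuous environment. For `0 < s < t < u` and `m < n`,
`0 ≤ L_{(m,s),(n,t)} - L_{(m+1,s),(n,t)} ≤ L_{(m,s),(n,u)} - L_{(m+1,s),(n,u)}`. -/
theorem lpp_vertical_increment_comparison
    (X : ℤ → ℝ → ℝ) (hX : ∀ r, Continuous (X r))
    (m n : ℤ) (s t u : ℝ)
    (hs : 0 < s) (hst : s < t) (htu : t < u) (hmn : m < n) :
    0 ≤ LPP X m s n t - LPP X (m + 1) s n t ∧
      LPP X m s n t - LPP X (m + 1) s n t ≤ LPP X m s n u - LPP X (m + 1) s n u := by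
  have hst' : s ≤ t := le_of_lt hst
  have htu' : t ≤ u := le_of_lt htu
  have hsu' : s ≤ u := le_trans hst' htu'
  constructor
  · exact sub_nonneg.mpr (lpp_succ_le hX hmn hst')
  · have key : LPP X m s n t + LPP X (m + 1) s n u
        ≤ LPP X m s n u + LPP X (m + 1) s n t := by
      apply le_of_forall_pos_le_add
      intro ε hε
      obtain ⟨x, ⟨σ, hσ, rfl⟩, hx⟩ :=
        exists_lt_of_lt_csSup (nonempty_energy (le_of_lt hmn) hst')
          (show LPP X m s n t - ε / 2 < LPP X m s n t by linarith)
      obtain ⟨y, ⟨τ, hτ, rfl⟩, hy⟩ :=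
        exists_lt_of_lt_csSup (nonempty_energy (by omega) hsu')
          (show LPP X (m + 1) s n u - ε / 2 < LPP X (m + 1) s n u by linarith)
      simp only [Set.mem_setOf_eq] at hσ hτ
      obtain ⟨σ', τ', hσ', hτ', hen⟩ := cross (X := X) hmn hst' htu' hσ hτ
      have e1 : energy X m n σ' ≤ LPP X m s n u :=
        le_csSup (bddAbove_energy hX m n s u) ⟨σ', hσ', rfl⟩
      have e2 : energy X (m + 1) n τ' ≤ LPP X (m + 1) s n t :=
        le_csSup (bddAbove_energy hX (m + 1) n s t) ⟨τ', hτ', rfl⟩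
      linarith
    linarith
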